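/- Let P* = v_0…v_k be a rainbow path in a properly edge-colored graph with colors c_i = c(v_{i-1}v_i). Suppose v_0 v_i ∈ E(G) with c(v_0 v_i) = c_j for some j with i ≤ j ≤ k-2, and v_k v_j ∈ E(G) with c(v_k v_j) ∉ {c_1,…,c_k}. Then v_{i-1} v_{i-2} … v_0 v_i v_{i+1} … v_j v_k v_{k-1} … v_{j+1} is a rainbow path of length k on vertex set {v_0,…,v_k} with terminal vertex v_{i-1}. -/

import Mathlib

open SimpleGraph

namespace NiceAux

variable {V : Type*} {G : SimpleGraph V}

/-- The walk consisting of the first `n` edges of `p`. -/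
def wtake {u v : V} : ∀ (p : G.Walk u v) (n : ℕ), G.Walk u (p.getVert n)
  | .nil, _ => .nil
  | .cons h q, 0 => Walk.nil.copy rfl ((Walk.cons h q).getVert_zero).symm
  | .cons h q, (n + 1) =>
      (Walk.cons h (wtake q n)).copy rfl (Walk.getVert_cons_succ q h).symm

lemma support_wtake {u v : V} : ∀ (p : G.Walk u v) (n : ℕ),
    (wtake p n).support = p.support.take (n + 1)
  | .nil, n => by simp [wtake]
  | .cons h q, 0 => by simp [wtake]
  | .cons h q, (n + 1) => by
      simp [wtake, support_wtake q n]

lemma edges_wtake {u v : V} : ∀ (p : G.Walk u v) (n : ℕ),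
    (wtake p n).edges = p.edges.take n
  | .nil, n => by simp [wtake]
  | .cons h q, 0 => by simp [wtake]
  | .cons h q, (n + 1) => by
      simp [wtake, edges_wtake q n]

lemma support_drop {u v : V} : ∀ (p : G.Walk u v) (n : ℕ), n ≤ p.length →
    (p.drop n).support = p.support.drop n
  | .nil, n, hn => by
      simp at hn; simp [Walk.drop, hn]
  | .cons h q, 0, _ => by simp [Walk.drop]
  | .cons h q, (n + 1), hn => by
      simp only [Walk.drop, Walk.support_copy, Walk.support_cons, List.drop_succ_cons]
      exact support_drop q n (by simpa using hn)

lemma edges_drop {u v : V} : ∀ (p : G.Walk u v) (n : ℕ), n ≤ p.length →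
    (p.drop n).edges = p.edges.drop n
  | .nil, n, hn => by
      simp at hn; simp [Walk.drop, hn]
  | .cons h q, 0, _ => by simp [Walk.drop]
  | .cons h q, (n + 1), hn => by
      simp only [Walk.drop, Walk.edges_copy, Walk.edges_cons, List.drop_succ_cons]
      exact edges_drop q n (by simpa using hn)

lemma getVert_drop {u v : V} : ∀ (p : G.Walk u v) (n m : ℕ),
    (p.drop n).getVert m = p.getVert (n + m)
  | .nil, n, m => by simp [Walk.drop, Walk.getVert]
  | .cons h q, 0, m => by simp [Walk.drop]
  | .cons h q, (n + 1), m => by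
      simp only [Walk.drop, Walk.getVert_copy]
      refine (getVert_drop q n m).trans ?_
      rw [Nat.add_right_comm, Walk.getVert_cons_succ]

lemma edges_getElem {u v : V} : ∀ (p : G.Walk u v) (n : ℕ) (h : n < p.length),
    p.edges[n]'(by rwa [p.length_edges]) = s(p.getVert n, p.getVert (n + 1))
  | .cons h q, 0, _ => by
      simp [Walk.getVert_cons_succ]
  | .cons h q, (n + 1), hn => by
      simpa [Walk.getVert_cons_succ] using edges_getElem q n (by simpa using hn)

lemma perm_helper {α : Type*} (T1 T2 T3 : List α) (b w : α) :
    (T1.reverse ++ (b :: (T2 ++ w :: T3.reverse))).Perm (b :: w :: (T1 ++ (T2 ++ T3))) := by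
  refine (List.Perm.append T1.reverse_perm
    ((((T3.reverse_perm).cons w).append_left T2).cons b)).trans ?_
  refine List.perm_middle.trans ?_
  refine List.Perm.cons b ?_
  exact (List.perm_middle.append_left T1).trans List.perm_middle

lemma perm_helper2 {α : Type*} (T1 T2 T3 : List α) (a b : α) :
    (T1 ++ (a :: (T2 ++ b :: T3))).Perm (a :: b :: (T1 ++ (T2 ++ T3))) := by
  refine List.perm_middle.trans ?_
  refine List.Perm.cons a ?_
  exact (List.perm_middle.append_left T1).trans List.perm_middle

end NiceAux

/-- A proper edge-coloring: edges sharing a vertex receive distinct colors. -/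
def ProperEdgeColoring {V : Type*} (G : SimpleGraph V) (c : Sym2 V → ℕ) : Prop :=
  ∀ ⦃u v w : V⦄, G.Adj u v → G.Adj u w → v ≠ w → c s(u, v) ≠ c s(u, w)

/-- Claim `nice_edges`, case `j ≥ i`. Let `p = v_0 … v_k` be
a rainbow path in a properly edge-colored graph. Suppose `v_0 v_i ∈ E(G)` with
`c(v_0 v_i) = c_j` for some `i ≤ j ≤ k-2`, and `v_k v_j ∈ E(G)` with
`c(v_k v_j)` not among the colors of `p`. Then
`v_{i-1} … v_0 v_i … v_j v_k v_{k-1} … v_{j+1}` is a rainbow path of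
length `k` on the vertex set `{v_0,…,v_k}`, i.e. there is a rainbow path of
length `k` on that vertex set with terminal vertices `v_{i-1}` and `v_{j+1}`. -/
theorem nice_edge_terminal_ge {V : Type*} [DecidableEq V]
    (G : SimpleGraph V) (c : Sym2 V → ℕ) (k : ℕ)
    (hproper : ProperEdgeColoring G c)
    (v₀ vₖ : V) (p : G.Walk v₀ vₖ) (hp : p.IsPath) (hlen : p.length = k)
    (hrb : (p.edges.map c).Nodup)
    (i j : ℕ) (hi : 1 ≤ i) (hij : i ≤ j) (hjk : j ≤ k - 2)
    (hadj : G.Adj v₀ (p.getVert i))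
    (hcol : c s(v₀, p.getVert i) = c s(p.getVert j, p.getVert (j + 1)))
    (hadj' : G.Adj vₖ (p.getVert j))
    (hnew : c s(vₖ, p.getVert j) ∉ p.edges.map c) :
    ∃ q : G.Walk (p.getVert (i - 1)) (p.getVert (j + 1)),
      q.IsPath ∧ q.length = k ∧ q.support.toFinset = p.support.toFinset ∧
      (q.edges.map c).Nodup := by
  subst hlen
  have hjn : j + 2 ≤ p.length := by omega
  -- the three pieces of the new walk
  set A := NiceAux.wtake p (i - 1) with hA
  set B := NiceAux.wtake (p.drop i) (j - i) with hB
  have hBend : (p.drop i).getVert (j - i) = p.getVert j := by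
    rw [NiceAux.getVert_drop]; congr 1; omega
  set C := p.drop (j + 1) with hC
  set q : G.Walk (p.getVert (i - 1)) (p.getVert (j + 1)) :=
    A.reverse.append (Walk.cons hadj
      ((B.copy rfl hBend).append (Walk.cons hadj'.symm C.reverse))) with hq
  -- support computations
  have hsupA : A.support = p.support.take i := by
    rw [hA, NiceAux.support_wtake]; congr 1; omega
  have hsupB : B.support = (p.support.drop i).take (j - i + 1) := by
    rw [hB, NiceAux.support_wtake, NiceAux.support_drop _ _ (by omega)]
  have hsupC : C.support = p.support.drop (j + 1) :=
    NiceAux.support_drop _ _ (by omega)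
  have hq_supp : q.support = A.support.reverse ++ (B.support ++ C.support.reverse) := by
    rw [hq]
    simp only [Walk.support_append, Walk.support_reverse, Walk.support_cons,
      List.tail_cons, Walk.support_copy]
  have hperm : q.support.Perm p.support := by
    rw [hq_supp]
    refine ((A.support.reverse_perm).append
      ((List.Perm.refl B.support).append (C.support.reverse_perm))).trans ?_
    rw [hsupA, hsupB, hsupC]
    have h2 : p.support.drop (j + 1) = (p.support.drop i).drop (j - i + 1) := by
      rw [List.drop_drop]; congr 1; omega
    rw [h2, List.take_append_drop, List.take_append_drop]
  -- edge computations
  have hedA : A.edges = p.edges.take (i - 1) := NiceAux.edges_wtake _ _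
  have hedB : B.edges = (p.edges.drop i).take (j - i) := by
    rw [hB, NiceAux.edges_wtake, NiceAux.edges_drop _ _ (by omega)]
  have hedC : C.edges = p.edges.drop (j + 1) :=
    NiceAux.edges_drop _ _ (by omega)
  have hq_edges : q.edges = A.edges.reverse ++
      (s(v₀, p.getVert i) :: (B.edges ++ (s(p.getVert j, vₖ) :: C.edges.reverse))) := by
    rw [hq]
    simp only [Walk.edges_append, Walk.edges_cons, Walk.edges_reverse, Walk.edges_copy]
  -- the list of colors
  set F := p.edges.map c with hF
  have hFlen : F.length = p.length := by rw [hF, List.length_map, p.length_edges]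
  have hjF : j < F.length := by omega
  have hiF : i - 1 < F.length := by omega
  set b := c s(p.getVert j, p.getVert (j + 1)) with hbdef
  set w := c s(vₖ, p.getVert j) with hwdef
  have hbF : F[j]'hjF = b := by
    simp only [hF, List.getElem_map]
    exact congrArg c (NiceAux.edges_getElem p j (by omega))
  have hw' : c s(p.getVert j, vₖ) = w := congrArg c (Sym2.eq_swap)
  have hqc : q.edges.map c =
      (F.take (i - 1)).reverse ++ (b :: ((F.drop i).take (j - i) ++
        (w :: (F.drop (j + 1)).reverse))) := by
    rw [hq_edges]
    simp only [List.map_append, List.map_cons, List.map_reverse, hedA, hedB, hedC,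
      List.map_take, List.map_drop, ← hF, hcol, hw']
  -- decomposition of F
  have e1 : F.drop (i - 1) = F[i - 1]'hiF :: F.drop i := by
    have h' : i - 1 + 1 = i := by omega
    rw [List.drop_eq_getElem_cons hiF, h']
  have e2 : F.drop i = (F.drop i).take (j - i) ++ F.drop j := by
    have h' : i + (j - i) = j := by omega
    conv_lhs => rw [← List.take_append_drop (j - i) (F.drop i)]
    rw [List.drop_drop, h']
  have e3 : F.drop j = b :: F.drop (j + 1) := by
    rw [List.drop_eq_getElem_cons hjF, hbF]
  have hdecomp : F = F.take (i - 1) ++ (F[i - 1]'hiF ::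
      ((F.drop i).take (j - i) ++ (b :: F.drop (j + 1)))) := by
    conv_lhs => rw [← List.take_append_drop (i - 1) F, e1, e2, e3]
  -- permutation facts for colors
  have hFperm : F.Perm (F[i - 1]'hiF :: b ::
      (F.take (i - 1) ++ ((F.drop i).take (j - i) ++ F.drop (j + 1)))) := by
    conv_lhs => rw [hdecomp]
    exact NiceAux.perm_helper2 _ _ _ _ _
  have hqcperm : (q.edges.map c).Perm (b :: w ::
      (F.take (i - 1) ++ ((F.drop i).take (j - i) ++ F.drop (j + 1)))) := by
    rw [hqc]; exact NiceAux.perm_helper _ _ _ _ _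
  -- assemble
  have hFnodup : (F[i - 1]'hiF :: b ::
      (F.take (i - 1) ++ ((F.drop i).take (j - i) ++ F.drop (j + 1)))).Nodup :=
    hFperm.nodup hrb
  have hbmemF : b ∈ F := by rw [hdecomp]; simp
  have hsubR : ∀ x ∈ F.take (i - 1) ++ ((F.drop i).take (j - i) ++ F.drop (j + 1)),
      x ∈ F := by
    intro x hx
    exact hFperm.mem_iff.mpr (by simp [hx])
  have hnodup_target : (b :: w ::
      (F.take (i - 1) ++ ((F.drop i).take (j - i) ++ F.drop (j + 1)))).Nodup := by
    simp only [List.nodup_cons, List.mem_cons] at hFnodup ⊢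
    refine ⟨?_, fun hw0 => hnew (hsubR _ hw0), hFnodup.2.2⟩
    rintro (heq | hb0)
    · exact hnew (heq ▸ hbmemF)
    · exact hFnodup.2.1 hb0
  refine ⟨q, ?_, ?_, ?_, hqcperm.symm.nodup hnodup_target⟩
  · exact (Walk.isPath_def q).mpr (hperm.symm.nodup hp.support_nodup)
  · have hlq := congrArg List.length hqc
    simp only [List.length_map, Walk.length_edges, List.length_append, List.length_cons,
      List.length_reverse, List.length_take, List.length_drop, hFlen] at hlq
    omega
  · refine Finset.ext fun x => ?_
    simp [List.mem_toFinset, hperm.mem_iff]
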